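/- Let A and B be effects on a Hilbert space. Then A ∘ B = B ∘ A (i.e., A^{1/2} B A^{1/2} = B^{1/2} A B^{1/2}) if and only if AB = BA. -/

import Mathlib

set_option synthInstance.maxHeartbeats 1000000
set_option maxHeartbeats 1000000

open scoped NNReal

section Aux

variable {A : Type*} [CStarAlgebra A]

lemma my_isClosed_centralizer (s : Set A) : IsClosed (Set.centralizer s) := by
  have : Set.centralizer s = ⋂ g ∈ s, {x | g * x = x * g} := by
    ext x; simp [Set.mem_centralizer_iff]
  rw [this]
  exact isClosed_biInter fun g _ ↦ isClosed_eq (continuous_const.mul continuous_id)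
    (continuous_id.mul continuous_const)

lemma my_cfc_mem_elemental (f : ℂ → ℂ) (a : A) [ha : IsStarNormal a] :
    cfc f a ∈ StarAlgebra.elemental ℂ a := by
  refine cfc_cases (· ∈ StarAlgebra.elemental ℂ a) a f (zero_mem _) fun hf ha' ↦ ?_
  rw [cfcHom_eq_of_isStarNormal]
  exact SetLike.coe_mem _

lemma my_commute_cfc {a b : A} [IsStarNormal a] (h1 : b * a = a * b)
    (h2 : star b * a = a * star b) (f : ℂ → ℂ) : b * cfc f a = cfc f a * b := by
  have hmem : cfc f a ∈ StarSubalgebra.centralizer ℂ {b} := by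
    apply StarAlgebra.elemental.le_of_mem (S := StarSubalgebra.centralizer ℂ {b})
    · rw [StarSubalgebra.coe_centralizer]
      exact my_isClosed_centralizer _
    · rw [StarSubalgebra.mem_centralizer_iff]
      rintro g rfl
      exact ⟨h1, h2⟩
    · exact my_cfc_mem_elemental f a
  rw [StarSubalgebra.mem_centralizer_iff] at hmem
  exact (hmem b rfl).1

lemma my_commute_sqrt {A : Type*} [CStarAlgebra A] [PartialOrder A] [StarOrderedRing A]
    {a b : A} (ha : 0 ≤ a) (hb : IsSelfAdjoint b) (hab : b * a = a * b) :
    b * CFC.sqrt a = CFC.sqrt a * b := by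
  have haSA : IsSelfAdjoint a := .of_nonneg ha
  have : IsStarNormal a := haSA.isStarNormal
  rw [CFC.sqrt_eq_cfc, cfc_nnreal_eq_real _ a ha, cfc_real_eq_complex]
  refine my_commute_cfc hab ?_ _
  rw [hb.star_eq]
  exact hab

end Aux

/-- Gudder–Nagy: for effects `A, B`, `A ∘ B = B ∘ A` iff `A B = B A`. -/
theorem sequentialProduct_comm_iff_commute
    {H : Type*} [NormedAddCommGroup H] [InnerProductSpace ℂ H] [CompleteSpace H]
    (A B : H →L[ℂ] H) (hA0 : 0 ≤ A) (hA1 : A ≤ 1) (hB0 : 0 ≤ B) (hB1 : B ≤ 1) :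
    CFC.sqrt A * B * CFC.sqrt A = CFC.sqrt B * A * CFC.sqrt B ↔ A * B = B * A := by
  set X := CFC.sqrt A with hXdef
  set Y := CFC.sqrt B with hYdef
  have hX0 : 0 ≤ X := CFC.sqrt_nonneg A
  have hY0 : 0 ≤ Y := CFC.sqrt_nonneg B
  have hXsa : IsSelfAdjoint X := .of_nonneg hX0
  have hYsa : IsSelfAdjoint Y := .of_nonneg hY0
  have hXX : X * X = A := CFC.sqrt_mul_sqrt_self A hA0
  have hYY : Y * Y = B := CFC.sqrt_mul_sqrt_self B hB0
  constructor
  · intro h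
    -- T = X * Y is normal
    have hstar : star (X * Y) = Y * X := by rw [star_mul, hXsa.star_eq, hYsa.star_eq]
    have hnormal : IsStarNormal (X * Y) := by
      refine ⟨?_⟩
      rw [Commute, SemiconjBy, hstar]
      calc Y * X * (X * Y) = Y * A * Y := by rw [← hXX]; noncomm_ring
        _ = X * B * X := h.symm
        _ = X * Y * (Y * X) := by rw [← hYY]; noncomm_ring
    -- the spectrum of X * Y is real
    set Z := CFC.sqrt X with hZdef
    have hZ0 : 0 ≤ Z := CFC.sqrt_nonneg X
    have hZsa : IsSelfAdjoint Z := .of_nonneg hZ0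
    have hZZ : Z * Z = X := CFC.sqrt_mul_sqrt_self X hX0
    have hsa' : IsSelfAdjoint (Z * Y * Z) := by
      rw [IsSelfAdjoint, star_mul, star_mul, hZsa.star_eq, hYsa.star_eq, mul_assoc]
    have hspec : spectrum ℂ (X * Y) \ {0} = spectrum ℂ (Z * Y * Z) \ {0} := by
      have : spectrum ℂ (Z * (Z * Y)) \ {0} = spectrum ℂ (Z * Y * Z) \ {0} :=
        spectrum.nonzero_mul_comm Z (Z * Y)
      rw [← mul_assoc, hZZ] at this
      exact this
    have hreal : ∀ x ∈ spectrum ℂ (X * Y), x = x.re := by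
      intro x hx
      rcases eq_or_ne x 0 with rfl | hx0
      · simp
      · have : x ∈ spectrum ℂ (Z * Y * Z) \ {0} := hspec ▸ ⟨hx, hx0⟩
        exact hsa'.mem_spectrum_eq_re this.1
    have hTsa : IsSelfAdjoint (X * Y) :=
      isSelfAdjoint_iff_isStarNormal_and_quasispectrumRestricts.mpr
        ⟨hnormal, SpectrumRestricts.real_iff.mpr hreal⟩
    have hcomm : Commute X Y := by
      have : Y * X = X * Y := by rw [← hstar, hTsa.star_eq]
      exact this.symm
    have : Commute A B := by
      rw [← hXX, ← hYY]
      exact (hcomm.mul_right hcomm).mul_left (hcomm.mul_right hcomm)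
    exact this
  · intro h
    have hXB : B * X = X * B := my_commute_sqrt hA0 (.of_nonneg hB0) h.symm
    have hYA : A * Y = Y * A := my_commute_sqrt hB0 (.of_nonneg hA0) h
    calc X * B * X = B * (X * X) := by rw [← hXB]; noncomm_ring
      _ = B * A := by rw [hXX]
      _ = A * B := h.symm
      _ = A * (Y * Y) := by rw [hYY]
      _ = Y * A * Y := by rw [← mul_assoc, hYA]
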